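/- Let C be an open convex cone in a finite-dimensional vector space with basepoint b ∈ C. Then the family of functions {j_{T,x} : T ∈ 𝒯(C), x ∈ T}, where j_{T,x}(y) := M_T(y/x)/M_T(b/x), is equi-Lipschitzian: there is a single Lipschitz constant valid for all members. -/

import Mathlib

open Set Filter Topology

variable {V : Type*} [NormedAddCommGroup V] [NormedSpace ℝ V] [FiniteDimensional ℝ V]

/-- An open cone: non-empty, open, convex, invariant under positive scaling, not containing 0. -/
def IsOpenCone (T : Set V) : Prop :=
  T.Nonempty ∧ IsOpen T ∧ Convex ℝ T ∧ (∀ c : ℝ, 0 < c → ∀ u ∈ T, c • u ∈ T) ∧ (0 : V) ∉ T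

/-- The gauge `M_T(y/x) = inf {λ > 0 : λ • x - y ∈ closure T}`. -/
noncomputable def funkM (T : Set V) (y x : V) : ℝ :=
  sInf {l : ℝ | 0 < l ∧ l • x - y ∈ closure T}

/-- The Funk metric `F_T(x,y) = log inf {λ > 0 : λ • y - x ∈ closure T}`. -/
noncomputable def funkF (T : Set V) (x y : V) : ℝ := Real.log (funkM T x y)

/-- The reverse Funk metric `r_T(x,y) = F_T(y,x)`. -/
noncomputable def revF (T : Set V) (x y : V) : ℝ := Real.log (funkM T y x)

/-- The Hilbert metric as the symmetrisation of the Funk metric. -/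
noncomputable def hilD (T : Set V) (x y : V) : ℝ := funkF T x y + revF T x y

/-- The dual cone, as a set of continuous linear functionals. -/
def dualCone (T : Set V) : Set (V →L[ℝ] ℝ) := {z | ∀ u ∈ T, 0 ≤ z u}

/-- The open tangent cone `τ(T,x) = {λ (w - x) : λ > 0, w ∈ T}`. -/
def openTangent (T : Set V) (x : V) : Set V :=
  {v | ∃ l : ℝ, 0 < l ∧ ∃ w ∈ T, v = l • (w - x)}

/-- The family `𝒯(C)` of iterated open tangent cones of `C` (including `C` itself). -/
inductive IterTangent {W : Type*} [NormedAddCommGroup W] [NormedSpace ℝ W] (C : Set W) :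
    Set W → Prop
  | base : IterTangent C C
  | step (T : Set W) (x : W) : IterTangent C T → x ∈ frontier T →
      IterTangent C (openTangent T x)
lemma IsOpenCone.add_mem' {T : Set V} (hT : IsOpenCone T) {u v : V} (hu : u ∈ T) (hv : v ∈ T) :
    u + v ∈ T := by
  have hmid : (1/2 : ℝ) • u + (1/2 : ℝ) • v ∈ T :=
    hT.2.2.1 hu hv (by norm_num) (by norm_num) (by norm_num)
  have h2 := hT.2.2.2.1 2 (by norm_num) _ hmid
  convert h2 using 1
  module

lemma IsOpenCone.add_closure_mem {T : Set V} (hT : IsOpenCone T) {u s : V} (hu : u ∈ T)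
    (hs : s ∈ closure T) : u + s ∈ T := by
  obtain ⟨δ, hδ, hball⟩ := Metric.isOpen_iff.1 hT.2.1 u hu
  obtain ⟨s', hs', hd⟩ := Metric.mem_closure_iff.1 hs δ hδ
  have h1 : u + s - s' ∈ T := by
    apply hball
    rw [Metric.mem_ball, dist_eq_norm]
    rw [dist_eq_norm] at hd
    have : u + s - s' - u = s - s' := by abel
    rw [this]
    exact hd
  have := hT.add_mem' h1 hs'
  simpa using this

lemma IsOpenCone.closure_smul_mem {T : Set V} (hT : IsOpenCone T) {c : ℝ} (hc : 0 < c) {s : V}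
    (hs : s ∈ closure T) : c • s ∈ closure T :=
  map_mem_closure (continuous_const_smul c) hs (fun v hv => hT.2.2.2.1 c hc v hv)

lemma IsOpenCone.closure_add_mem {T : Set V} (hT : IsOpenCone T) {a b : V}
    (ha : a ∈ closure T) (hb : b ∈ closure T) : a + b ∈ closure T := by
  have hmid : (1/2 : ℝ) • a + (1/2 : ℝ) • b ∈ closure T :=
    (hT.2.2.1.closure) ha hb (by norm_num) (by norm_num) (by norm_num)
  have := hT.closure_smul_mem (show (0:ℝ) < 2 by norm_num) hmid
  convert this using 1
  module

lemma iterTangent_isOpenCone {C : Set V} (hC : IsOpenCone C) {T : Set V}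
    (h : IterTangent C T) : IsOpenCone T ∧ C ⊆ T := by
  induction h with
  | base => exact ⟨hC, subset_rfl⟩
  | step T x hT hx ih =>
    obtain ⟨hT', hCT⟩ := ih
    have hxcl : x ∈ closure T := hx.1
    have hxT : x ∉ T := by
      rw [hT'.2.1.frontier_eq] at hx; exact hx.2
    have hsub : T ⊆ openTangent T x := by
      intro w hw
      exact ⟨1, one_pos, w + x, hT'.add_closure_mem hw hxcl, by simp⟩
    have hsm : ∀ c : ℝ, 0 < c → ∀ v ∈ openTangent T x, c • v ∈ openTangent T x := by
      rintro c hc v ⟨l, hl, w, hw, rfl⟩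
      exact ⟨c * l, mul_pos hc hl, w, hw, by rw [smul_smul]⟩
    have hadd : ∀ v₁ ∈ openTangent T x, ∀ v₂ ∈ openTangent T x,
        v₁ + v₂ ∈ openTangent T x := by
      rintro v₁ ⟨l₁, hl₁, w₁, hw₁, rfl⟩ v₂ ⟨l₂, hl₂, w₂, hw₂, rfl⟩
      have hll : (0:ℝ) < l₁ + l₂ := add_pos hl₁ hl₂
      set w : V := (l₁ + l₂)⁻¹ • (l₁ • w₁ + l₂ • w₂) with hwdef
      have hwT : w ∈ T := by
        apply hT'.2.2.2.1 _ (inv_pos.2 hll)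
        exact hT'.add_mem' (hT'.2.2.2.1 l₁ hl₁ _ hw₁) (hT'.2.2.2.1 l₂ hl₂ _ hw₂)
      refine ⟨l₁ + l₂, hll, w, hwT, ?_⟩
      have h1 : (l₁ + l₂) • w = l₁ • w₁ + l₂ • w₂ := smul_inv_smul₀ (ne_of_gt hll) _
      rw [smul_sub (l₁ + l₂) w x, h1, add_smul, smul_sub, smul_sub]
      abel
    refine ⟨⟨?_, ?_, ?_, hsm, ?_⟩, hCT.trans hsub⟩
    · exact hT'.1.mono hsub
    · have heq : openTangent T x = ⋃ l ∈ Ioi (0:ℝ), (fun w => l • (w - x)) '' T := by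
        ext v
        simp only [openTangent, mem_setOf_eq, mem_iUnion, mem_image, mem_Ioi, exists_prop]
        constructor
        · rintro ⟨l, hl, w, hw, rfl⟩; exact ⟨l, hl, w, hw, rfl⟩
        · rintro ⟨l, hl, w, hw, rfl⟩; exact ⟨l, hl, w, hw, rfl⟩
      rw [heq]
      refine isOpen_biUnion fun l hl => ?_
      have h1 : IsOpenMap fun v : V => l • v := isOpenMap_smul₀ (ne_of_gt hl)
      have h2 : IsOpenMap fun w : V => w - x := by
        simpa [sub_eq_add_neg] using (isOpenMap_add_right (-x) : IsOpenMap fun w : V => w + -x)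
      exact (h1.comp h2) T hT'.2.1
    · intro v₁ hv₁ v₂ hv₂ a c ha hc hac
      rcases eq_or_lt_of_le ha with rfl | ha'
      · simp only [zero_smul, zero_add]
        have : c = 1 := by linarith
        rw [this, one_smul]; exact hv₂
      rcases eq_or_lt_of_le hc with rfl | hc'
      · simp only [zero_smul, add_zero]
        have : a = 1 := by linarith
        rw [this, one_smul]; exact hv₁
      exact hadd _ (hsm a ha' _ hv₁) _ (hsm c hc' _ hv₂)
    · rintro ⟨l, hl, w, hw, hwe⟩
      have : w = x := by
        have := hwe.symm
        rw [smul_eq_zero] at this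
        rcases this with h | h
        · exact absurd h (ne_of_gt hl)
        · rwa [sub_eq_zero] at h
      exact hxT (this ▸ hw)

theorem equiLipschitz_funk_gauges (C : Set V) (hC : IsOpenCone C) (b : V) (hb : b ∈ C) :
    ∃ K : NNReal, ∀ T : Set V, IterTangent C T → ∀ x ∈ T,
      LipschitzWith K (fun y : V => funkM T y x / funkM T b x) := by
  obtain ⟨ε, hε, hball⟩ := Metric.isOpen_iff.1 hC.2.1 b hb
  refine ⟨Real.toNNReal (2/ε), ?_⟩
  intro T hTT x hx
  obtain ⟨hT, hCT⟩ := iterTangent_isOpenCone hC hTT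
  set S : V → Set ℝ := fun u => {l : ℝ | 0 < l ∧ l • x - u ∈ closure T} with hS
  have hMdef : ∀ u, funkM T u x = sInf (S u) := fun u => rfl
  have hbdd : ∀ u, BddBelow (S u) := fun u => ⟨0, fun l hl => le_of_lt hl.1⟩
  have hne : ∀ u : V, (S u).Nonempty := by
    intro u
    obtain ⟨δ, hδ, hballx⟩ := Metric.isOpen_iff.1 hT.2.1 x hx
    set l : ℝ := ‖u‖ / δ + 1 with hldef
    have hl : 0 < l := by positivity
    refine ⟨l, hl, ?_⟩
    have h1 : x - l⁻¹ • u ∈ T := by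
      apply hballx
      rw [Metric.mem_ball, dist_eq_norm]
      have h2 : x - l⁻¹ • u - x = -(l⁻¹ • u) := by abel
      rw [h2, norm_neg, norm_smul, Real.norm_eq_abs, abs_of_pos (inv_pos.2 hl)]
      rw [inv_mul_eq_div, div_lt_iff₀ hl]
      have : δ * l = ‖u‖ + δ := by
        rw [hldef]; field_simp
      rw [this]; linarith
    have h2 : l • (x - l⁻¹ • u) ∈ T := hT.2.2.2.1 l hl _ h1
    have h3 : l • (x - l⁻¹ • u) = l • x - u := by
      rw [smul_sub, smul_inv_smul₀ (ne_of_gt hl)]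
    exact subset_closure (h3 ▸ h2)
  have hM0 : ∀ u, 0 ≤ funkM T u x := fun u => Real.sInf_nonneg (fun l hl => le_of_lt hl.1)
  have hmpos : 0 < funkM T b x := by
    obtain ⟨f, hf⟩ := geometric_hahn_banach_point_open hT.2.2.1 hT.2.1 hT.2.2.2.2
    have hfpos : ∀ u ∈ T, 0 < f u := fun u hu => by simpa using hf u hu
    have hfcl : ∀ s ∈ closure T, 0 ≤ f s := by
      intro s hs
      have hcl : closure T ⊆ f ⁻¹' (Ici 0) :=
        closure_minimal (fun u hu => le_of_lt (hfpos u hu)) (isClosed_Ici.preimage f.continuous)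
      exact hcl hs
    have hfx : 0 < f x := hfpos x hx
    have hfb : 0 < f b := hfpos b (hCT hb)
    have hdiv : 0 < f b / f x := div_pos hfb hfx
    have hle : f b / f x ≤ sInf (S b) := by
      apply le_csInf (hne b)
      intro l hl
      have h0 := hfcl _ hl.2
      rw [map_sub, map_smul, smul_eq_mul] at h0
      rw [div_le_iff₀ hfx]
      linarith
    rw [hMdef]; linarith
  have hstar : ∀ v : V, funkM T v x ≤ 2/ε * ‖v‖ * funkM T b x := by
    intro v
    rcases eq_or_ne v 0 with rfl | hv
    · have h0 : funkM T 0 x ≤ 0 := by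
        apply le_of_forall_pos_le_add
        intro η hη
        have hmem : η ∈ S 0 := by
          refine ⟨hη, ?_⟩
          have := hT.2.2.2.1 η hη x hx
          simpa using subset_closure this
        rw [hMdef]; simpa using csInf_le (hbdd 0) hmem
      simp only [norm_zero, mul_zero, zero_mul]
      exact le_trans h0 le_rfl
    · set c : ℝ := 2/ε * ‖v‖ with hc
      have hcpos : 0 < c := by
        have : (0:ℝ) < ‖v‖ := norm_pos_iff.2 hv
        positivity
      have hmem : ∀ l ∈ S b, c * l ∈ S v := by
        intro l hl
        refine ⟨mul_pos hcpos hl.1, ?_⟩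
        have h1 : c • (l • x - b) ∈ closure T := hT.closure_smul_mem hcpos hl.2
        have h2 : b - c⁻¹ • v ∈ C := by
          apply hball
          rw [Metric.mem_ball, dist_eq_norm]
          have h3 : b - c⁻¹ • v - b = -(c⁻¹ • v) := by abel
          rw [h3, norm_neg, norm_smul, Real.norm_eq_abs, abs_of_pos (inv_pos.2 hcpos)]
          rw [inv_mul_eq_div, div_lt_iff₀ hcpos, hc]
          have hvpos : (0:ℝ) < ‖v‖ := norm_pos_iff.2 hv
          have : ε * (2/ε * ‖v‖) = 2 * ‖v‖ := by field_simp
          rw [this]; linarith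
        have h3 : c • (b - c⁻¹ • v) ∈ closure T :=
          subset_closure (hT.2.2.2.1 c hcpos _ (hCT h2))
        have h4 := hT.closure_add_mem h1 h3
        have heq : c • (l • x - b) + c • (b - c⁻¹ • v) = (c * l) • x - v := by
          rw [smul_sub, smul_sub, smul_inv_smul₀ (ne_of_gt hcpos), smul_smul]
          abel
        rwa [heq] at h4
      have hdivle : sInf (S v) / c ≤ sInf (S b) := by
        apply le_csInf (hne b)
        intro l hl
        rw [div_le_iff₀ hcpos]
        have := csInf_le (hbdd v) (hmem l hl)
        rw [hMdef] at *
        linarith [this]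
      rw [hMdef, hMdef]
      calc sInf (S v) = sInf (S v) / c * c := by field_simp
        _ ≤ sInf (S b) * c := mul_le_mul_of_nonneg_right hdivle (le_of_lt hcpos)
        _ = 2/ε * ‖v‖ * sInf (S b) := by rw [hc]; ring
  have hsubadd : ∀ u w : V, funkM T u x ≤ funkM T (u - w) x + funkM T w x := by
    intro u w
    have key : ∀ l ∈ S (u - w), ∀ l' ∈ S w, sInf (S u) ≤ l + l' := by
      intro l hl l' hl'
      apply csInf_le (hbdd u)
      refine ⟨add_pos hl.1 hl'.1, ?_⟩
      have hsum := hT.closure_add_mem hl.2 hl'.2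
      have heq : (l • x - (u - w)) + (l' • x - w) = (l + l') • x - u := by
        rw [add_smul]; abel
      rwa [heq] at hsum
    have h1 : ∀ l ∈ S (u - w), sInf (S u) - l ≤ sInf (S w) := fun l hl =>
      le_csInf (hne w) (fun l' hl' => by linarith [key l hl l' hl'])
    have h2 : sInf (S u) - sInf (S w) ≤ sInf (S (u - w)) :=
      le_csInf (hne (u - w)) (fun l hl => by linarith [h1 l hl])
    rw [hMdef, hMdef, hMdef]
    linarith
  apply LipschitzWith.of_dist_le_mul
  intro y y'
  rw [Real.coe_toNNReal _ (by positivity : (0:ℝ) ≤ 2/ε)]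
  simp only [dist_eq_norm, Real.norm_eq_abs]
  have hdiff : |funkM T y x - funkM T y' x| ≤ 2/ε * ‖y - y'‖ * funkM T b x := by
    rw [abs_le]
    constructor
    · have hs := hsubadd y' y
      have ht := hstar (y' - y)
      rw [norm_sub_rev] at ht
      linarith
    · have hs := hsubadd y y'
      have ht := hstar (y - y')
      linarith
  have hdd : funkM T y x / funkM T b x - funkM T y' x / funkM T b x
      = (funkM T y x - funkM T y' x) / funkM T b x := by
    rw [div_sub_div_same]
  rw [hdd, abs_div, abs_of_pos hmpos, div_le_iff₀ hmpos]
  calc |funkM T y x - funkM T y' x| ≤ 2/ε * ‖y - y'‖ * funkM T b x := hdiff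
    _ = 2/ε * ‖y - y'‖ * funkM T b x := rfl
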